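/- Let G be a deterministic first-order grammar, let E = E(x₁,…,xₙ) and F = F(x₁,…,xₙ) be regular terms, and suppose the word u ∈ A* exposes the equation x_i ≐ H(x₁,…,xₙ) for (E,F), i.e. E →^u x_i and F →^u H with H ≠ x_i, or vice versa. Then for all ground regular terms T₁,…,Tₙ: eqlevel(E(T₁,…,Tₙ), F(T₁,…,Tₙ)) ≤ |u| + eqlevel(T_i, H(T₁,…,Tₙ)) in ℕ ∪ {ω}. -/

import Mathlib

namespace FOGPaper

variable {S A : Type*}

/-- Extension of the single-step transition relations to words. -/
def Steps (tr : A → S → S → Prop) : List A → S → S → Prop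
  | [], s, t => t = s
  | a :: w, s, t => ∃ s', tr a s s' ∧ Steps tr w s' t

/-- The trace set of a state: the finite words it enables. -/
def traces (tr : A → S → S → Prop) (s : S) : Set (List A) :=
  {w | ∃ t, Steps tr w s t}

/-- The traces of length at most `k`. -/
def tracesLe (tr : A → S → S → Prop) (k : ℕ) (s : S) : Set (List A) :=
  {w ∈ traces tr s | w.length ≤ k}

/-- `r ∼ₖ s` : `r` and `s` enable the same words of length at most `k`. -/
def SimK (tr : A → S → S → Prop) (k : ℕ) (r s : S) : Prop :=
  tracesLe tr k r = tracesLe tr k s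

/-- `r ∼ s` : trace equivalence. -/
def Sim (tr : A → S → S → Prop) (r s : S) : Prop :=
  traces tr r = traces tr s

/-- The equivalence level in ℕ ∪ {ω}: the supremum of the `k` with `r ∼ₖ s`
(equal to `k` iff `r ∼ₖ s` and not `r ∼ₖ₊₁ s`, and to `ω = ⊤` iff `r ∼ s`). -/
noncomputable def eqLevel (tr : A → S → S → Prop) (r s : S) : ℕ∞ :=
  ⨆ k ∈ {k : ℕ | SimK tr k r s}, (k : ℕ∞)

/-- The offending words for `(r,s)` : the shortest words lying in exactly one of
`traces r`, `traces s`. -/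
def offWords (tr : A → S → S → Prop) (r s : S) : Set (List A) :=
  {w | w ∈ (traces tr r \ traces tr s) ∪ (traces tr s \ traces tr r) ∧
       ∀ v ∈ (traces tr r \ traces tr s) ∪ (traces tr s \ traces tr r),
         w.length ≤ v.length}

/-- A labelled transition system is deterministic if each `→ᵃ` is a partial function. -/
def IsDet (tr : A → S → S → Prop) : Prop :=
  ∀ a r s₁ s₂, tr a r s₁ → tr a r s₂ → s₁ = s₂

/-- The infinite traces (ω-words enabled in a state). -/
def omTraces (tr : A → S → S → Prop) (s : S) : Set (ℕ → A) :=
  {α | ∃ f : ℕ → S, f 0 = s ∧ ∀ i, tr (α i) (f i) (f (i + 1))}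

/-- Concatenation of a finite word with an infinite word. -/
def wApp (u : List A) (α : ℕ → A) : ℕ → A := fun i =>
  if h : i < u.length then u[i]'h else α (i - u.length)


/-- Possibly-infinite terms over nonterminals `N` (and variables `x₁, x₂, …`),
represented as partial labelling functions on positions (`Sum.inr i` is the
variable `xᵢ`). -/
abbrev Tm (N : Type*) := List ℕ → Option (N ⊕ ℕ)

/-- Arity of a label: nonterminals have their arity, variables have arity 0. -/
def arityOf {N : Type*} (arity : N → ℕ) : N ⊕ ℕ → ℕ
  | Sum.inl X => arity X
  | Sum.inr _ => 0

/-- Well-formed term: the domain is nonempty (contains the root) and matches the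
arities of the labels (which makes it prefix-closed). -/
def TmWF {N : Type*} (arity : N → ℕ) (E : Tm N) : Prop :=
  (E []).isSome ∧
    ∀ γ i, (E (γ ++ [i])).isSome ↔ ∃ v, E γ = some v ∧ 1 ≤ i ∧ i ≤ arityOf arity v

/-- The subterm (occurrence) of `E` at position `γ`. -/
def subAt {N : Type*} (E : Tm N) (γ : List ℕ) : Tm N := fun δ => E (γ ++ δ)

/-- A term is regular if it has only finitely many subterms. -/
def TmRegular {N : Type*} (E : Tm N) : Prop := (Set.range (subAt E)).Finite

/-- A term is finite if its domain is finite. -/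
def TmFinite {N : Type*} (E : Tm N) : Prop := {γ | (E γ).isSome}.Finite

/-- A term is ground if no variable occurs in it. -/
def TmGround {N : Type*} (E : Tm N) : Prop := ∀ γ i, E γ ≠ some (Sum.inr i)

/-- `E = E(x₁,…,xₙ)` : all variables occurring in `E` are among `x₁,…,xₙ`. -/
def VarsBdd {N : Type*} (n : ℕ) (E : Tm N) : Prop :=
  ∀ γ i, E γ = some (Sum.inr i) → 1 ≤ i ∧ i ≤ n

/-- The term consisting of the single variable `xᵢ`. -/
def varTm (N : Type*) (i : ℕ) : Tm N := fun γ => if γ = [] then some (Sum.inr i) else none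

open Classical in
/-- Substitution `E σ`: each occurrence of the variable `xᵢ` is replaced by `σ i`.
(For a well-formed `E`, the decomposition of a position through a variable
occurrence is unique, so the choice is canonical.) -/
noncomputable def subst {N : Type*} (E : Tm N) (σ : ℕ → Tm N) : Tm N := fun γ =>
  if h : ∃ p : List ℕ × ℕ × List ℕ, γ = p.1 ++ p.2.2 ∧ E p.1 = some (Sum.inr p.2.1)
  then σ h.choose.2.1 h.choose.2.2
  else E γ

/-- The term `X G₁ G₂ …` with root `X` and `i`-th child `Gs i`. -/
def node {N : Type*} (X : N) (Gs : ℕ → Tm N) : Tm N := fun γ =>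
  match γ with
  | [] => some (Sum.inl X)
  | i :: δ => Gs i δ

/-- A first-order grammar: ranked nonterminals and a finite set of root-rewriting
rules `X x₁ … xₘ →ᵃ E` where `E` is a finite term with variables among `x₁,…,xₘ`,
`m = arity X`. -/
structure FOG (N A : Type*) where
  arity : N → ℕ
  rules : Set (N × A × Tm N)
  rules_fin : rules.Finite
  rules_wf : ∀ r ∈ rules, TmFinite r.2.2 ∧ TmWF arity r.2.2 ∧ VarsBdd (arity r.1) r.2.2

/-- A grammar is deterministic: at most one rule for each pair `(X, a)`. -/
def FOG.Det {N A : Type*} (G : FOG N A) : Prop :=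
  ∀ X a E E', (X, a, E) ∈ G.rules → (X, a, E') ∈ G.rules → E = E'

/-- The transition relation of the LTS `L_G` generated by the grammar `G` on terms:
each rule `X x₁ … xₘ →ᵃ E` gives `X G₁ … Gₘ →ᵃ E(G₁,…,Gₘ)`. -/
def gstep {N A : Type*} (G : FOG N A) (a : A) (s t : Tm N) : Prop :=
  ∃ X E Gs, (X, a, E) ∈ G.rules ∧ s = node X Gs ∧ t = subst E Gs


-- auxiliary
lemma steps_append {tr : A → S → S → Prop} (u w : List A) (s t : S) :
    Steps tr (u ++ w) s t ↔ ∃ m, Steps tr u s m ∧ Steps tr w m t := by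
  induction u generalizing s with
  | nil => simp [Steps]
  | cons a u ih =>
    constructor
    · rintro ⟨s', h1, h2⟩
      obtain ⟨m, hm1, hm2⟩ := (ih s').mp h2
      exact ⟨m, ⟨s', h1, hm1⟩, hm2⟩
    · rintro ⟨m, ⟨s', h1, hm1⟩, hm2⟩
      exact ⟨s', h1, (ih s').mpr ⟨m, hm1, hm2⟩⟩

lemma steps_det {tr : A → S → S → Prop} (hdet : IsDet tr) :
    ∀ {u : List A} {s t₁ t₂ : S}, Steps tr u s t₁ → Steps tr u s t₂ → t₁ = t₂ := by
  intro u
  induction u with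
  | nil => intro s t₁ t₂ h1 h2; exact h1.trans h2.symm
  | cons a u ih =>
    rintro s t₁ t₂ ⟨m₁, hm₁, hs₁⟩ ⟨m₂, hm₂, hs₂⟩
    obtain rfl := hdet a s m₁ m₂ hm₁ hm₂
    exact ih hs₁ hs₂

lemma mem_tracesLe {tr : A → S → S → Prop} {k : ℕ} {s : S} {w : List A} :
    w ∈ tracesLe tr k s ↔ (∃ t, Steps tr w s t) ∧ w.length ≤ k := Iff.rfl

lemma tracesLe_shift {tr : A → S → S → Prop} (hdet : IsDet tr) {u : List A} {r r' s s' : S}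
    (hr : Steps tr u r r') (hs : Steps tr u s s') (m : ℕ)
    (hsub : tracesLe tr (u.length + m) r ⊆ tracesLe tr (u.length + m) s) :
    tracesLe tr m r' ⊆ tracesLe tr m s' := by
  intro w hw
  obtain ⟨⟨t, ht⟩, hlen⟩ := hw
  have h1 : u ++ w ∈ tracesLe tr (u.length + m) r := by
    refine ⟨⟨t, (steps_append u w r t).mpr ⟨r', hr, ht⟩⟩, by simp; omega⟩
  obtain ⟨⟨t', ht'⟩, -⟩ := hsub h1
  obtain ⟨mid, hmid1, hmid2⟩ := (steps_append u w s t').mp ht'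
  obtain rfl := steps_det hdet hmid1 hs
  exact ⟨⟨t', hmid2⟩, hlen⟩

lemma eqLevel_comm (tr : A → S → S → Prop) (r s : S) :
    eqLevel tr r s = eqLevel tr s r := by
  unfold eqLevel
  have h : {k : ℕ | SimK tr k r s} = {k : ℕ | SimK tr k s r} := by
    ext k; exact ⟨Eq.symm, Eq.symm⟩
  rw [h]

lemma eqLevel_le_shift {tr : A → S → S → Prop} (hdet : IsDet tr) {u : List A} {r r' s s' : S}
    (hr : Steps tr u r r') (hs : Steps tr u s s') :
    eqLevel tr r s ≤ (u.length : ℕ∞) + eqLevel tr r' s' := by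
  rw [eqLevel]
  refine iSup₂_le fun k hk => ?_
  rcases le_or_gt k u.length with h | h
  · exact le_trans (by exact_mod_cast h) le_self_add
  · set m := k - u.length with hm
    have hk' : k = u.length + m := by omega
    have hsim : SimK tr m r' s' := by
      have hk2 : SimK tr (u.length + m) r s := hk' ▸ hk
      exact Set.Subset.antisymm
        (tracesLe_shift hdet hr hs m hk2.subset)
        (tracesLe_shift hdet hs hr m hk2.symm.subset)
    have hle : (m : ℕ∞) ≤ eqLevel tr r' s' :=
      le_iSup₂ (f := fun k (_ : k ∈ {k : ℕ | SimK tr k r' s'}) => (k : ℕ∞)) m hsim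
    calc (k : ℕ∞) = (u.length : ℕ∞) + (m : ℕ∞) := by
          rw [hk']; push_cast; ring
      _ ≤ (u.length : ℕ∞) + eqLevel tr r' s' := add_le_add_right hle _


section TermAux

variable {N : Type*}

/-- At most one prefix of any position carries a variable. -/
def UniqVar (E : Tm N) : Prop :=
  ∀ (β₁ β₂ δ₁ δ₂ : List ℕ) (j₁ j₂ : ℕ), β₁ ++ δ₁ = β₂ ++ δ₂ →
    E β₁ = some (Sum.inr j₁) → E β₂ = some (Sum.inr j₂) → β₁ = β₂

lemma subst_eq_var {E : Tm N} (hU : UniqVar E) {β : List ℕ} {j : ℕ}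
    (hβ : E β = some (Sum.inr j)) (σ : ℕ → Tm N) (δ : List ℕ) :
    subst E σ (β ++ δ) = σ j δ := by
  have h : ∃ p : List ℕ × ℕ × List ℕ,
      β ++ δ = p.1 ++ p.2.2 ∧ E p.1 = some (Sum.inr p.2.1) := ⟨(β, j, δ), rfl, hβ⟩
  rw [subst, dif_pos h]
  obtain ⟨h1, h2⟩ := h.choose_spec
  have hb : h.choose.1 = β := hU _ _ _ _ _ _ h1.symm h2 hβ
  rw [hb] at h1 h2
  rw [hβ] at h2
  have hj : h.choose.2.1 = j := by
    have := Option.some.inj h2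
    exact (Sum.inr.inj this.symm)
  have hd : h.choose.2.2 = δ := (List.append_cancel_left h1.symm)
  rw [hj, hd]

lemma subst_eq_novar {E : Tm N} (σ : ℕ → Tm N) {γ : List ℕ}
    (h : ¬ ∃ p : List ℕ × ℕ × List ℕ,
        γ = p.1 ++ p.2.2 ∧ E p.1 = some (Sum.inr p.2.1)) :
    subst E σ γ = E γ := by
  rw [subst, dif_neg h]

lemma var_of_subst {E : Tm N} (hU : UniqVar E) {Gs : ℕ → Tm N} {q : List ℕ} {m : ℕ}
    (h : subst E Gs q = some (Sum.inr m)) :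
    ∃ β j ρ, q = β ++ ρ ∧ E β = some (Sum.inr j) ∧ Gs j ρ = some (Sum.inr m) := by
  by_cases hd : ∃ p : List ℕ × ℕ × List ℕ,
      q = p.1 ++ p.2.2 ∧ E p.1 = some (Sum.inr p.2.1)
  · obtain ⟨⟨β, j, ρ⟩, hq, hE⟩ := hd
    refine ⟨β, j, ρ, hq, hE, ?_⟩
    rw [hq, subst_eq_var hU hE] at h
    exact h
  · rw [subst_eq_novar Gs hd] at h
    exact absurd ⟨(q, m, []), (List.append_nil q).symm, h⟩ hd

lemma wf_prefix {arity : N → ℕ} {E : Tm N} (h : TmWF arity E) (δ : List ℕ) :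
    ∀ β, (E (β ++ δ)).isSome → (E β).isSome := by
  induction δ using List.reverseRecOn with
  | nil => simp
  | append_singleton δ' i ih =>
    intro β hb
    have h1 : (E ((β ++ δ') ++ [i])).isSome := by
      simpa [List.append_assoc] using hb
    obtain ⟨v, hv, -, -⟩ := (h.2 _ _).mp h1
    exact ih β (by rw [hv]; rfl)

lemma wf_no_below_var {arity : N → ℕ} {E : Tm N} (h : TmWF arity E) {β : List ℕ} {j : ℕ}
    (hβ : E β = some (Sum.inr j)) {ρ : List ℕ} (hρ : (E (β ++ ρ)).isSome) : ρ = [] := by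
  cases ρ with
  | nil => rfl
  | cons r ρ' =>
    exfalso
    have h1 : (E ((β ++ [r]) ++ ρ')).isSome := by
      simpa [List.append_assoc] using hρ
    have h2 := wf_prefix h ρ' (β ++ [r]) h1
    obtain ⟨v, hv, hr1, hr2⟩ := (h.2 β r).mp h2
    rw [hβ] at hv
    obtain rfl := Option.some.inj hv
    simp [arityOf] at hr2
    omega

lemma wf_uniqVar {arity : N → ℕ} {E : Tm N} (h : TmWF arity E) : UniqVar E := by
  intro β₁ β₂ δ₁ δ₂ j₁ j₂ heq h1 h2
  have hp : β₁ <+: β₂ ∨ β₂ <+: β₁ :=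
    List.prefix_or_prefix_of_prefix ⟨δ₁, heq⟩ ⟨δ₂, rfl⟩
  rcases hp with ⟨ρ, rfl⟩ | ⟨ρ, rfl⟩
  · have : ρ = [] := wf_no_below_var h h1 (by rw [h2]; rfl)
    rw [this, List.append_nil]
  · have : ρ = [] := wf_no_below_var h h2 (by rw [h1]; rfl)
    rw [this, List.append_nil]

lemma uniqVar_child {X : N} {Gs : ℕ → Tm N} (h : UniqVar (node X Gs)) (j : ℕ) :
    UniqVar (Gs j) := by
  intro β₁ β₂ δ₁ δ₂ j₁ j₂ heq h1 h2
  have := h (j :: β₁) (j :: β₂) δ₁ δ₂ j₁ j₂ (by simp [heq]) h1 h2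
  exact List.cons.inj this |>.2

lemma uniqVar_node {X : N} {Gs : ℕ → Tm N} (h : ∀ j, UniqVar (Gs j)) :
    UniqVar (node X Gs) := by
  intro β₁ β₂ δ₁ δ₂ j₁ j₂ heq h1 h2
  cases β₁ with
  | nil => simp [node] at h1
  | cons i₁ β₁' =>
    cases β₂ with
    | nil => simp [node] at h2
    | cons i₂ β₂' =>
      simp only [List.cons_append, List.cons.injEq] at heq
      obtain ⟨rfl, heq'⟩ := heq
      have := h i₁ β₁' β₂' δ₁ δ₂ j₁ j₂ heq' h1 h2
      rw [this]

lemma subst_node {X : N} {Gs : ℕ → Tm N} (hGs : ∀ j, UniqVar (Gs j)) (σ : ℕ → Tm N) :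
    subst (node X Gs) σ = node X (fun j => subst (Gs j) σ) := by
  funext γ
  cases γ with
  | nil =>
    have hnd : ¬ ∃ p : List ℕ × ℕ × List ℕ,
        ([] : List ℕ) = p.1 ++ p.2.2 ∧ node X Gs p.1 = some (Sum.inr p.2.1) := by
      rintro ⟨⟨β, j, ρ⟩, hq, hE⟩
      obtain ⟨rfl, -⟩ := List.append_eq_nil_iff.mp hq.symm
      simp [node] at hE
    rw [subst_eq_novar σ hnd]
    rfl
  | cons j δ =>
    by_cases hd : ∃ β m ρ, δ = β ++ ρ ∧ Gs j β = some (Sum.inr m)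
    · obtain ⟨β, m, ρ, rfl, hβ⟩ := hd
      have hnode : node X Gs (j :: β) = some (Sum.inr m) := hβ
      have h1 : subst (node X Gs) σ ((j :: β) ++ ρ) = σ m ρ :=
        subst_eq_var (uniqVar_node hGs) hnode σ ρ
      have h2 : subst (Gs j) σ (β ++ ρ) = σ m ρ := subst_eq_var (hGs j) hβ σ ρ
      simpa [node] using h1.trans h2.symm
    · have hnd : ¬ ∃ p : List ℕ × ℕ × List ℕ,
          (j :: δ) = p.1 ++ p.2.2 ∧ node X Gs p.1 = some (Sum.inr p.2.1) := by
        rintro ⟨⟨β, m, ρ⟩, hq, hE⟩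
        cases β with
        | nil => simp [node] at hE
        | cons j' β' =>
          simp only [List.cons_append, List.cons.injEq] at hq
          obtain ⟨rfl, rfl⟩ := hq
          exact hd ⟨β', m, ρ, rfl, hE⟩
      have hnd' : ¬ ∃ p : List ℕ × ℕ × List ℕ,
          δ = p.1 ++ p.2.2 ∧ Gs j p.1 = some (Sum.inr p.2.1) := by
        rintro ⟨⟨β, m, ρ⟩, hq, hE⟩
        exact hd ⟨β, m, ρ, hq, hE⟩
      rw [subst_eq_novar σ hnd]
      show node X Gs (j :: δ) = node X (fun j => subst (Gs j) σ) (j :: δ)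
      show Gs j δ = subst (Gs j) σ δ
      rw [subst_eq_novar σ hnd']

lemma uniqVar_subst {R : Tm N} (hR : UniqVar R) {Gs : ℕ → Tm N}
    (hGs : ∀ j, UniqVar (Gs j)) : UniqVar (subst R Gs) := by
  intro q₁ q₂ δ₁ δ₂ m₁ m₂ heq h1 h2
  obtain ⟨β₁, j₁, ρ₁, rfl, hβ₁, hG₁⟩ := var_of_subst hR h1
  obtain ⟨β₂, j₂, ρ₂, rfl, hβ₂, hG₂⟩ := var_of_subst hR h2
  rw [List.append_assoc, List.append_assoc] at heq
  obtain rfl : β₁ = β₂ := hR _ _ _ _ _ _ heq hβ₁ hβ₂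
  obtain rfl : j₁ = j₂ := Sum.inr.inj (Option.some.inj (hβ₁.symm.trans hβ₂))
  have heq' : ρ₁ ++ δ₁ = ρ₂ ++ δ₂ := List.append_cancel_left heq
  obtain rfl : ρ₁ = ρ₂ := hGs j₁ _ _ _ _ _ _ heq' hG₁ hG₂
  rfl

lemma subst_subst {R : Tm N} (hR : UniqVar R) {Gs : ℕ → Tm N}
    (hGs : ∀ j, UniqVar (Gs j)) (σ : ℕ → Tm N) :
    subst (subst R Gs) σ = subst R (fun j => subst (Gs j) σ) := by
  funext γ
  by_cases hd : ∃ p : List ℕ × ℕ × List ℕ,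
      γ = p.1 ++ p.2.2 ∧ R p.1 = some (Sum.inr p.2.1)
  · obtain ⟨⟨β, j, δ⟩, rfl, hβ⟩ := hd
    have hrhs : subst R (fun j => subst (Gs j) σ) (β ++ δ) = subst (Gs j) σ δ :=
      subst_eq_var hR hβ _ δ
    rw [hrhs]
    by_cases hd2 : ∃ p : List ℕ × ℕ × List ℕ,
        δ = p.1 ++ p.2.2 ∧ Gs j p.1 = some (Sum.inr p.2.1)
    · obtain ⟨⟨β', m, ρ⟩, rfl, hβ'⟩ := hd2
      have hv : subst R Gs (β ++ β') = some (Sum.inr m) := by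
        have := subst_eq_var hR hβ Gs β'
        rw [this]; exact hβ'
      have h1 : subst (subst R Gs) σ ((β ++ β') ++ ρ) = σ m ρ :=
        subst_eq_var (uniqVar_subst hR hGs) hv σ ρ
      have h2 : subst (Gs j) σ (β' ++ ρ) = σ m ρ := subst_eq_var (hGs j) hβ' σ ρ
      rw [← List.append_assoc] at *
      rw [h1, h2]
    · have hnd : ¬ ∃ p : List ℕ × ℕ × List ℕ,
          β ++ δ = p.1 ++ p.2.2 ∧ subst R Gs p.1 = some (Sum.inr p.2.1) := by
        rintro ⟨⟨q, m, δ₂⟩, hq, hval⟩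
        obtain ⟨β₂, j₂, ρ₂, rfl, hβ₂, hG₂⟩ := var_of_subst hR hval
        rw [List.append_assoc] at hq
        obtain rfl : β = β₂ := hR _ _ _ _ _ _ hq hβ hβ₂
        obtain rfl : j = j₂ := Sum.inr.inj (Option.some.inj (hβ.symm.trans hβ₂))
        have : δ = ρ₂ ++ δ₂ := List.append_cancel_left hq
        exact hd2 ⟨(ρ₂, m, δ₂), this, hG₂⟩
      rw [subst_eq_novar σ hnd, subst_eq_var hR hβ Gs δ,
        subst_eq_novar σ hd2]
  · have hnd : ¬ ∃ p : List ℕ × ℕ × List ℕ,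
        γ = p.1 ++ p.2.2 ∧ subst R Gs p.1 = some (Sum.inr p.2.1) := by
      rintro ⟨⟨q, m, δ₂⟩, hq, hval⟩
      obtain ⟨β₂, j₂, ρ₂, rfl, hβ₂, hG₂⟩ := var_of_subst hR hval
      rw [List.append_assoc] at hq
      exact hd ⟨(β₂, j₂, ρ₂ ++ δ₂), hq, hβ₂⟩
    have hnd2 : ¬ ∃ p : List ℕ × ℕ × List ℕ,
        γ = p.1 ++ p.2.2 ∧ R p.1 = some (Sum.inr p.2.1) := hd
    rw [subst_eq_novar σ hnd, subst_eq_novar Gs hd, subst_eq_novar _ hnd2]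

lemma subst_varTm (i : ℕ) (σ : ℕ → Tm N) : subst (varTm N i) σ = σ i := by
  have hU : UniqVar (varTm N i) := by
    intro β₁ β₂ δ₁ δ₂ j₁ j₂ heq h1 h2
    have e1 : β₁ = [] := by
      by_contra hne; simp [varTm, hne] at h1
    have e2 : β₂ = [] := by
      by_contra hne; simp [varTm, hne] at h2
    rw [e1, e2]
  have hv : varTm N i [] = some (Sum.inr i) := by simp [varTm]
  funext γ
  have := subst_eq_var hU hv σ γ
  simpa using this

end TermAux


section GrammarAux

variable {N A : Type*}

lemma node_inj {X X' : N} {Gs Gs' : ℕ → Tm N} (h : node X Gs = node X' Gs') :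
    X = X' ∧ Gs = Gs' := by
  constructor
  · have := congrFun h []
    simpa [node] using this
  · funext j δ
    exact congrFun h (j :: δ)

lemma gstep_det (G : FOG N A) (hdet : G.Det) : IsDet (gstep G) := by
  rintro a r s₁ s₂ ⟨X, E, Gs, hr, rfl, rfl⟩ ⟨X', E', Gs', hr', heq, rfl⟩
  obtain ⟨rfl, rfl⟩ := node_inj heq
  obtain rfl : E = E' := hdet X a E E' hr hr'
  rfl

lemma uniqVar_gstep {G : FOG N A} {a : A} {s t : Tm N}
    (hst : gstep G a s t) (hU : UniqVar s) : UniqVar t := by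
  obtain ⟨X, R, Gs, hr, rfl, rfl⟩ := hst
  exact uniqVar_subst (wf_uniqVar (G.rules_wf _ hr).2.1) (fun j => uniqVar_child hU j)

lemma gstep_subst {G : FOG N A} {a : A} {s t : Tm N}
    (hst : gstep G a s t) (hU : UniqVar s) (σ : ℕ → Tm N) :
    gstep G a (subst s σ) (subst t σ) := by
  obtain ⟨X, R, Gs, hr, rfl, rfl⟩ := hst
  have hGs : ∀ j, UniqVar (Gs j) := fun j => uniqVar_child hU j
  have hR : UniqVar R := wf_uniqVar (G.rules_wf _ hr).2.1
  refine ⟨X, R, fun j => subst (Gs j) σ, hr, ?_, ?_⟩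
  · exact subst_node hGs σ
  · exact subst_subst hR hGs σ

lemma steps_subst {G : FOG N A} {u : List A} :
    ∀ {s t : Tm N}, Steps (gstep G) u s t → UniqVar s → (σ : ℕ → Tm N) →
      Steps (gstep G) u (subst s σ) (subst t σ) := by
  induction u with
  | nil =>
    intro s t h hU σ
    rw [show t = s from h]
    rfl
  | cons a u ih =>
    rintro s t ⟨s', h1, h2⟩ hU σ
    exact ⟨subst s' σ, gstep_subst h1 hU σ, ih h2 (uniqVar_gstep h1 hU) σ⟩

end GrammarAux

/-- if `u` exposes the equation `xᵢ ≐ H(x₁,…,xₙ)` for `(E,F)` then for all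
ground regular `T₁,…,Tₙ` : `eqlevel(E(T₁,…,Tₙ), F(T₁,…,Tₙ)) ≤ |u| + eqlevel(Tᵢ, H(T₁,…,Tₙ))`. -/
theorem eqLevel_le_of_exposed_equation {N A : Type*} [Fintype N] [Fintype A]
    (G : FOG N A) (hdet : G.Det) (n : ℕ) (E F H : Tm N)
    (hEreg : TmRegular E) (hEwf : TmWF G.arity E) (hEvars : VarsBdd n E)
    (hFreg : TmRegular F) (hFwf : TmWF G.arity F) (hFvars : VarsBdd n F)
    (hHvars : VarsBdd n H)
    (i : ℕ) (hi1 : 1 ≤ i) (hin : i ≤ n) (hHne : H ≠ varTm N i)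
    (u : List A)
    (hexp : (Steps (gstep G) u E (varTm N i) ∧ Steps (gstep G) u F H) ∨
            (Steps (gstep G) u F (varTm N i) ∧ Steps (gstep G) u E H))
    (σ : ℕ → Tm N)
    (hσ : ∀ j, 1 ≤ j → j ≤ n → TmGround (σ j) ∧ TmRegular (σ j) ∧ TmWF G.arity (σ j)) :
    eqLevel (gstep G) (subst E σ) (subst F σ) ≤
      (u.length : ℕ∞) + eqLevel (gstep G) (σ i) (subst H σ) := by
  have hIsDet := gstep_det G hdet
  have hEU := wf_uniqVar hEwf
  have hFU := wf_uniqVar hFwf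
  rcases hexp with ⟨hE, hF⟩ | ⟨hF, hE⟩
  · have h1 := steps_subst hE hEU σ
    rw [subst_varTm] at h1
    have h2 := steps_subst hF hFU σ
    exact eqLevel_le_shift hIsDet h1 h2
  · have h1 := steps_subst hF hFU σ
    rw [subst_varTm] at h1
    have h2 := steps_subst hE hEU σ
    have h3 := eqLevel_le_shift hIsDet h2 h1
    rwa [eqLevel_comm (gstep G) (subst H σ) (σ i)] at h3

end FOGPaper
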